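/- For the Legendre polynomials L_j and α > 0, define L̂^α_{R,j}(x) = (1/Γ(α)) ∫_x^1 (s−x)^{α−1} L_j(s) ds. Then for all j ≥ 1, the three-term recurrence (j+1+α) L̂^α_{R,j+1}(x) = (2j+1) x L̂^α_{R,j}(x) − (j−α) L̂^α_{R,j−1}(x) holds for x ∈ [−1,1). -/

import Mathlib

open MeasureTheory intervalIntegral

/-- The Legendre polynomials via the three-term recurrence. -/
noncomputable def legendreP : ℕ → ℝ → ℝ
  | 0 => fun _ => 1
  | 1 => fun x => x
  | (j + 2) => fun x =>
      ((2 * (j : ℝ) + 3) * x * legendreP (j + 1) x - ((j : ℝ) + 1) * legendreP j x) / ((j : ℝ) + 2)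

open Polynomial

noncomputable def legP : ℕ → Polynomial ℝ
  | 0 => 1
  | 1 => X
  | (n + 2) => C ((2 * (n : ℝ) + 3) / ((n : ℝ) + 2)) * (X * legP (n + 1))
      - C (((n : ℝ) + 1) / ((n : ℝ) + 2)) * legP n

lemma legP_eval_aux (n : ℕ) (x : ℝ) :
    (legP n).eval x = legendreP n x ∧ (legP (n+1)).eval x = legendreP (n+1) x := by
  induction n with
  | zero => constructor <;> simp [legP, legendreP]
  | succ n ih =>
    refine ⟨ih.2, ?_⟩
    have h2 : ((n:ℝ) + 2) ≠ 0 := by positivity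
    show (legP (n+2)).eval x = legendreP (n+2) x
    rw [legP, legendreP]
    simp only [eval_sub, eval_mul, eval_C, eval_X, ih.1, ih.2]
    field_simp

lemma legP_eval (n : ℕ) (x : ℝ) : (legP n).eval x = legendreP n x := (legP_eval_aux n x).1

lemma legP_rec (n : ℕ) :
    (C (n:ℝ) + 2) * legP (n + 2)
      = (2 * C (n:ℝ) + 3) * (X * legP (n + 1)) - (C (n:ℝ) + 1) * legP n := by
  have h2 : ((n:ℝ) + 2) ≠ 0 := by positivity
  have e1 : (C (n:ℝ) + 2 : Polynomial ℝ) = C ((n:ℝ) + 2) := by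
    rw [map_add, map_ofNat]
  have e2 : (2 * C (n:ℝ) + 3 : Polynomial ℝ) = C (2*(n:ℝ) + 3) := by
    rw [map_add, map_mul, map_ofNat, map_ofNat]
  have e3 : (C (n:ℝ) + 1 : Polynomial ℝ) = C ((n:ℝ) + 1) := by simp
  have k1 : C (((n:ℝ)+2) * ((2*(n:ℝ)+3)/((n:ℝ)+2))) = (C (2*(n:ℝ)+3) : Polynomial ℝ) := by
    congr 1; field_simp
  have k2 : C (((n:ℝ)+2) * (((n:ℝ)+1)/((n:ℝ)+2))) = (C ((n:ℝ)+1) : Polynomial ℝ) := by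
    congr 1; field_simp
  rw [legP, e1, e2, e3, mul_sub, ← mul_assoc, ← C_mul, k1,
    ← mul_assoc (C ((n:ℝ)+2)), ← C_mul, k2]

lemma legP_eval_one (n : ℕ) : (legP n).eval 1 = 1 ∧ (legP (n+1)).eval 1 = 1 := by
  induction n with
  | zero => constructor <;> simp [legP]
  | succ n ih =>
    refine ⟨ih.2, ?_⟩
    have h2 : ((n:ℝ) + 2) ≠ 0 := by positivity
    show (legP (n+2)).eval 1 = 1
    rw [legP]
    simp only [eval_sub, eval_mul, eval_C, eval_X, ih.1, ih.2]
    field_simp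
    ring

lemma C_add_two_ne (n : ℕ) : (C (n:ℝ) + 2 : Polynomial ℝ) ≠ 0 := by
  have : (C (n:ℝ) + 2 : Polynomial ℝ) = C ((n:ℝ) + 2) := by rw [map_add, map_ofNat]
  rw [this, Ne, C_eq_zero]
  positivity

lemma C_add_three_ne (n : ℕ) : (C (n:ℝ) + 3 : Polynomial ℝ) ≠ 0 := by
  have : (C (n:ℝ) + 3 : Polynomial ℝ) = C ((n:ℝ) + 3) := by rw [map_add, map_ofNat]
  rw [this, Ne, C_eq_zero]
  positivity

lemma legP_B_aux (n : ℕ) :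
    (X * derivative (legP (n+1)) = derivative (legP n) + (C (n:ℝ) + 1) * legP (n+1)) ∧
    (X * derivative (legP (n+2)) = derivative (legP (n+1)) + (C (n:ℝ) + 2) * legP (n+2)) := by
  induction n with
  | zero =>
    constructor
    · simp [legP]
    · show (X:Polynomial ℝ) * derivative (legP 2) = derivative (legP 1) + (C ((0:ℕ):ℝ) + 2) * legP 2
      rw [legP]
      simp [legP]
      have h : (C ((2:ℝ)⁻¹) : Polynomial ℝ) * 2 = 1 := by
        rw [← map_ofNat C 2, ← C_mul]; norm_num
      linear_combination h
  | succ n ih =>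
    have h0 := ih.1
    have h1 := ih.2
    constructor
    · push_cast
      simp only [map_add, map_one]
      linear_combination ih.2
    · push_cast
      simp only [map_add, map_one]
      have hr2 := legP_rec (n+1)
      push_cast at hr2
      simp only [map_add, map_one] at hr2
      have hd3 := congrArg derivative hr2
      have hd2 := congrArg derivative (legP_rec n)
      simp only [derivative_mul, derivative_add, derivative_sub, derivative_X, derivative_C,
        derivative_one, derivative_ofNat, zero_mul, mul_one, zero_add, add_zero,
        mul_zero] at hd3 hd2
      apply mul_left_cancel₀ (C_add_two_ne n)
      apply mul_left_cancel₀ (C_add_three_ne n)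
      have key : (C (n:ℝ)+3) * ((C (n:ℝ)+2) * (X * derivative (legP (n+3))))
          = (C (n:ℝ)+3) * ((C (n:ℝ)+2) * (derivative (legP (n+2)) + (C (n:ℝ)+3) * legP (n+3))) := by
        linear_combination (C (n:ℝ)+2) * X * hd3 + (C (n:ℝ)+2) * (2*C (n:ℝ)+5) * X * h1
          + (C (n:ℝ)+2) * (C (n:ℝ)+3) * h0 - (C (n:ℝ)+3) * (2*C (n:ℝ)+3) * h0
          - (C (n:ℝ)+2) * (C (n:ℝ)+3) * hr2 - (C (n:ℝ)+3) * hd2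
      linear_combination key

lemma legP_B (n : ℕ) :
    X * derivative (legP (n+1)) = derivative (legP n) + (C (n:ℝ) + 1) * legP (n+1) :=
  (legP_B_aux n).1

lemma legP_C (n : ℕ) :
    derivative (legP (n+2)) = derivative (legP n) + (2 * C (n:ℝ) + 3) * legP (n+1) := by
  have h0 := legP_B n
  have hd2 := congrArg derivative (legP_rec n)
  simp only [derivative_mul, derivative_add, derivative_sub, derivative_X, derivative_C,
    derivative_one, derivative_ofNat, zero_mul, mul_one, zero_add, add_zero, mul_zero] at hd2
  apply mul_left_cancel₀ (C_add_two_ne n)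
  linear_combination hd2 + (2 * C (n:ℝ) + 3) * h0

lemma legP_one (n : ℕ) : (legP n).eval 1 = 1 := (legP_eval_one n).1

lemma rpow_intInt {x : ℝ} {β : ℝ} (hβ : -1 < β) (g : ℝ → ℝ) (hg : Continuous g) :
    IntervalIntegrable (fun s => (s - x) ^ β * g s) volume x 1 := by
  have h0 : IntervalIntegrable (fun t : ℝ => t ^ β) volume 0 (1 - x) :=
    intervalIntegrable_rpow' hβ
  have h2 : IntervalIntegrable (fun s : ℝ => (s - x) ^ β) volume x 1 := by
    simpa using h0.comp_sub_right x
  exact h2.mul_continuousOn hg.continuousOn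


/-- Three-term recurrence for the right fractional integrals of the Legendre polynomials:
`(j+1+α) L̂^α_{R,j+1}(x) = (2j+1) x L̂^α_{R,j}(x) − (j−α) L̂^α_{R,j−1}(x)` for `j ≥ 1`. -/
theorem legendre_right_frac_integral_rec (α : ℝ) (hα : 0 < α) (j : ℕ) (hj : 1 ≤ j)
    (x : ℝ) (hx : x ∈ Set.Ico (-1 : ℝ) 1) :
    ((j : ℝ) + 1 + α) *
        ((1 / Real.Gamma α) * ∫ s in x..(1 : ℝ), (s - x) ^ (α - 1) * legendreP (j + 1) s)
      = (2 * (j : ℝ) + 1) * x *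
          ((1 / Real.Gamma α) * ∫ s in x..(1 : ℝ), (s - x) ^ (α - 1) * legendreP j s)
        - ((j : ℝ) - α) *
          ((1 / Real.Gamma α) * ∫ s in x..(1 : ℝ), (s - x) ^ (α - 1) * legendreP (j - 1) s) := by
  obtain ⟨m, rfl⟩ : ∃ m, j = m + 1 := ⟨j - 1, (Nat.succ_pred_eq_of_pos hj).symm⟩
  obtain ⟨hx1, hx2⟩ := hx
  have hxle : x ≤ 1 := hx2.le
  have hα1 : (-1 : ℝ) < α - 1 := by linarith
  have hα0 : (-1 : ℝ) < α := by linarith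
  simp only [Nat.add_sub_cancel, ← legP_eval]
  push_cast
  show (((m:ℝ) + 1) + 1 + α) *
        ((1 / Real.Gamma α) * ∫ s in x..(1 : ℝ), (s - x) ^ (α - 1) * (legP (m+2)).eval s)
      = (2 * ((m:ℝ) + 1) + 1) * x *
          ((1 / Real.Gamma α) * ∫ s in x..(1 : ℝ), (s - x) ^ (α - 1) * (legP (m+1)).eval s)
        - (((m:ℝ) + 1) - α) *
          ((1 / Real.Gamma α) * ∫ s in x..(1 : ℝ), (s - x) ^ (α - 1) * (legP m).eval s)
  set I2 := ∫ s in x..(1:ℝ), (s - x) ^ (α - 1) * (legP (m + 2)).eval s with hI2def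
  set I1 := ∫ s in x..(1:ℝ), (s - x) ^ (α - 1) * (legP (m + 1)).eval s with hI1def
  set I0 := ∫ s in x..(1:ℝ), (s - x) ^ (α - 1) * (legP m).eval s with hI0def
  set J := ∫ s in x..(1:ℝ), (s - x) ^ α * (legP (m + 1)).eval s with hJdef
  have int2 := rpow_intInt (x := x) hα1 _ (legP (m + 2)).continuous
  have int1 := rpow_intInt (x := x) hα1 _ (legP (m + 1)).continuous
  have int0 := rpow_intInt (x := x) hα1 _ (legP m).continuous
  have intJ := rpow_intInt (x := x) hα0 _ (legP (m + 1)).continuous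
  have intG : IntervalIntegrable
      (fun s => (s - x) ^ (α - 1) * ((legP (m+2)).eval s - (legP m).eval s)) volume x 1 :=
    rpow_intInt hα1 _ ((legP (m+2)).continuous.sub (legP m).continuous)
  have intH : IntervalIntegrable
      (fun s => (s - x) ^ α * ((2*(m:ℝ)+3) * (legP (m+1)).eval s)) volume x 1 :=
    rpow_intInt hα0 _ (continuous_const.mul (legP (m+1)).continuous)
  -- integration by parts / FTC fact
  have hcont : ContinuousOn
      (fun s => (s - x) ^ α * ((legP (m+2)).eval s - (legP m).eval s)) (Set.Icc x 1) := by
    apply ContinuousOn.mul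
    · exact (continuous_id.sub continuous_const).continuousOn.rpow_const (fun s _ => Or.inr hα.le)
    · exact ((legP (m+2)).continuous.sub (legP m).continuous).continuousOn
  have hderiv : ∀ s ∈ Set.Ioo x 1,
      HasDerivAt (fun s => (s - x) ^ α * ((legP (m+2)).eval s - (legP m).eval s))
        (α * ((s - x) ^ (α - 1) * ((legP (m+2)).eval s - (legP m).eval s))
          + (s - x) ^ α * ((2*(m:ℝ)+3) * (legP (m+1)).eval s)) s := by
    intro s hs
    have hsx : s - x ≠ 0 := sub_ne_zero.mpr (ne_of_gt hs.1)
    have h1 : HasDerivAt (fun s => (s - x) ^ α) (α * (s - x) ^ (α - 1)) s := by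
      have hb : HasDerivAt (fun s : ℝ => s - x) 1 s := (hasDerivAt_id s).sub_const x
      have := (Real.hasDerivAt_rpow_const (x := s - x) (p := α) (Or.inl hsx)).comp s hb
      rw [mul_one] at this
      exact this
    have h2 : HasDerivAt (fun s => (legP (m+2)).eval s - (legP m).eval s)
        ((derivative (legP (m+2))).eval s - (derivative (legP m)).eval s) s :=
      ((legP (m+2)).hasDerivAt s).sub ((legP m).hasDerivAt s)
    have h3 := h1.mul h2
    have hc := congrArg (eval s) (legP_C m)
    simp only [eval_add, eval_mul, eval_C, eval_ofNat, eval_X, eval_one] at hc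
    refine h3.congr_deriv ?_
    rw [hc]
    ring
  have hFTC := integral_eq_sub_of_hasDerivAt_of_le hxle hcont hderiv
      ((intG.const_mul α).add intH)
  have hA : α * (I2 - I0) + (2*(m:ℝ)+3) * J = 0 := by
    have hsplit : (∫ s in x..(1:ℝ),
        (α * ((s - x) ^ (α - 1) * ((legP (m+2)).eval s - (legP m).eval s))
          + (s - x) ^ α * ((2*(m:ℝ)+3) * (legP (m+1)).eval s)))
        = α * (I2 - I0) + (2*(m:ℝ)+3) * J := by
      rw [integral_add (intG.const_mul α) intH, intervalIntegral.integral_const_mul]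
      congr 1
      · congr 1
        simp_rw [mul_sub]
        exact integral_sub int2 int0
      · rw [hJdef, ← intervalIntegral.integral_const_mul]
        apply integral_congr
        intro s _
        ring
    rw [← hsplit, hFTC]
    simp [legP_one, Real.zero_rpow hα.ne']
  have hB : (2*(m:ℝ)+3) * x * I1
      = ((m:ℝ)+2) * I2 + (((m:ℝ)+1) * I0 - (2*(m:ℝ)+3) * J) := by
    have hpt : Set.EqOn
        (fun s => (2*(m:ℝ)+3) * x * ((s - x) ^ (α - 1) * (legP (m+1)).eval s))
        (fun s => ((m:ℝ)+2) * ((s - x) ^ (α - 1) * (legP (m+2)).eval s)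
          + (((m:ℝ)+1) * ((s - x) ^ (α - 1) * (legP m).eval s)
            - (2*(m:ℝ)+3) * ((s - x) ^ α * (legP (m+1)).eval s)))
        (Set.uIcc x 1) := by
      intro s hs
      rw [Set.uIcc_of_le hxle] at hs
      have hxs : x ≤ s := hs.1
      have hrec := congrArg (eval s) (legP_rec m)
      simp only [eval_mul, eval_add, eval_sub, eval_C, eval_X, eval_ofNat, eval_one] at hrec
      have hsx : (s - x) ^ (α - 1) * (s - x) = (s - x) ^ α := by
        rcases eq_or_lt_of_le hxs with h | h
        · rw [← h]
          simp [Real.zero_rpow hα.ne']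
        · have hp : 0 < s - x := sub_pos.mpr h
          calc (s-x) ^ (α-1) * (s-x) = (s-x) ^ (α-1) * (s-x) ^ (1:ℝ) := by rw [Real.rpow_one]
            _ = (s-x) ^ (α-1+1) := (Real.rpow_add hp _ _).symm
            _ = (s-x) ^ α := by norm_num
      show (2*(m:ℝ)+3) * x * ((s - x) ^ (α - 1) * (legP (m+1)).eval s)
          = ((m:ℝ)+2) * ((s - x) ^ (α - 1) * (legP (m+2)).eval s)
            + (((m:ℝ)+1) * ((s - x) ^ (α - 1) * (legP m).eval s)
              - (2*(m:ℝ)+3) * ((s - x) ^ α * (legP (m+1)).eval s))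
      linear_combination (-((s - x) ^ (α - 1))) * hrec
        - (2*(m:ℝ)+3) * (legP (m+1)).eval s * hsx
    have := integral_congr (μ := volume) hpt
    rw [intervalIntegral.integral_const_mul] at this
    rw [hI1def, hI2def, hI0def, hJdef]
    rw [this, integral_add (int2.const_mul _) ((int0.const_mul _).sub (intJ.const_mul _)),
      integral_sub (int0.const_mul _) (intJ.const_mul _),
      intervalIntegral.integral_const_mul, intervalIntegral.integral_const_mul, intervalIntegral.integral_const_mul]
  linear_combination (1 / Real.Gamma α) * hA - (1 / Real.Gamma α) * hB
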